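/- Let (C1, C2) be a CSS-T pair of length n. Then C1 ∗ C2 ⊆ C1^⊥, i.e., for every a ∈ C1 and every x ∈ C2, the coordinatewise product a ∗ x lies in the dual code C1^⊥. -/

import Mathlib

open Matrix BigOperators

section Binary

variable {ι : Type*} [Fintype ι] [DecidableEq ι]

/-- Hamming weight of a binary vector. -/
def wH (x : ι → ZMod 2) : ℕ := (Finset.univ.filter fun j => x j = 1).card

/-- `supportLE y x` means `supp(y) ⊆ supp(x)`, i.e. `y ⪯ x`. -/
def supportLE (y x : ι → ZMod 2) : Prop := ∀ j, y j = 1 → x j = 1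

instance (x : ι → ZMod 2) : DecidablePred (fun y : ι → ZMod 2 => supportLE y x) :=
  fun _ => inferInstanceAs (Decidable (∀ j, _ = 1 → x j = 1))

/-- The mod-2 inner product `x yᵀ = ∑ j, x j * y j`. -/
def binInner (x y : ι → ZMod 2) : ZMod 2 := ∑ j, x j * y j

/-- The dual code `C^⊥ = {y : x yᵀ = 0 for all x ∈ C}`. -/
def dualCode (C : Submodule (ZMod 2) (ι → ZMod 2)) : Submodule (ZMod 2) (ι → ZMod 2) where
  carrier := { y | ∀ x ∈ C, binInner x y = 0 }
  add_mem' := by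
    intro a b ha hb x hx
    have h : binInner x (a + b) = binInner x a + binInner x b := by
      simp [binInner, mul_add, Finset.sum_add_distrib]
    rw [h, ha x hx, hb x hx, add_zero]
  zero_mem' := by
    intro x hx
    simp [binInner]
  smul_mem' := by
    intro c a ha x hx
    have h : binInner x (c • a) = c * binInner x a := by
      simp only [binInner, Pi.smul_apply, smul_eq_mul, Finset.mul_sum]
      exact Finset.sum_congr rfl fun j _ => by ring
    rw [h, ha x hx, mul_zero]

/-- A CSS-T pair of binary linear codes: `C₂ ⊆ C₁`, every codeword of `C₂` has even
weight, and for each `x ∈ C₂` there is a self-dual code in `C₁^⊥`, of dimension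
`w_H(x)/2`, supported on `x`. -/
def CSST (C₁ C₂ : Submodule (ZMod 2) (ι → ZMod 2)) : Prop :=
  C₂ ≤ C₁ ∧
  (∀ x ∈ C₂, Even (wH x)) ∧
  (∀ x ∈ C₂, ∃ Cx : Submodule (ZMod 2) (ι → ZMod 2),
    Cx ≤ dualCode C₁ ∧
    2 * Module.finrank (ZMod 2) Cx = wH x ∧
    (∀ z ∈ Cx, supportLE z x) ∧
    (∀ y ∈ Cx, ∀ z ∈ Cx, binInner y z = 0))

/-- A family of rows is triorthogonal if all pairs and triples of distinct rows have
even overlap. -/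
def Triorthogonal {p : ℕ} (g : Fin p → ι → ZMod 2) : Prop :=
  (∀ a b : Fin p, a < b → Even (wH (g a * g b))) ∧
  (∀ a b c : Fin p, a < b → b < c → Even (wH (g a * g b * g c)))

end Binary

/-- Binary vectors of length `n`. -/
abbrev V (n : ℕ) := Fin n → ZMod 2

/-- The Hermitian `n`-qubit Pauli matrix
`E(a,b) = ⊗_j i^{a_j b_j} X^{a_j} Z^{b_j}`, written entrywise:
`E(a,b)[u,v] = i^{∑ a_j b_j} · 1[u = v ⊕ a] · (−1)^{∑ b_j v_j}`. -/
def PauliE {n : ℕ} (a b : V n) : Matrix (V n) (V n) ℂ :=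
  Matrix.of fun u v =>
    Complex.I ^ (∑ j, (a j).val * (b j).val) *
      (if u = v + a then 1 else 0) *
      (-1 : ℂ) ^ (∑ j, (b j).val * (v j).val)

/-- The transversal `T` gate `T^{⊗n}`, where `T = diag(1, e^{iπ/4})`; it is the diagonal
matrix whose entry at `v` is `e^{iπ w_H(v)/4}`. -/
noncomputable def transT (n : ℕ) : Matrix (V n) (V n) ℂ :=
  Matrix.diagonal fun v : V n => Complex.exp ((Real.pi : ℂ) * Complex.I / 4) ^ wH v

/-- `ε` is a sign `±1`. -/
def IsSign (ε : ℂ) : Prop := ε = 1 ∨ ε = -1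

/-- A stabilizer group on `n` qubits, given as the finite set of its elements:
each element is `±E(a,b)`, the set is closed under multiplication, abelian,
nonempty (hence contains the identity), and does not contain `−I`. -/
def IsStabilizer (n : ℕ) (S : Finset (Matrix (V n) (V n) ℂ)) : Prop :=
  S.Nonempty ∧
  (∀ g ∈ S, ∃ (ε : ℂ) (a b : V n), IsSign ε ∧ g = ε • PauliE a b) ∧
  (∀ g ∈ S, ∀ h ∈ S, g * h ∈ S) ∧
  (∀ g ∈ S, ∀ h ∈ S, g * h = h * g) ∧
  (-1 : Matrix (V n) (V n) ℂ) ∉ S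

/-- The code projector `Π_S = |S|⁻¹ ∑_{g ∈ S} g  (= 2^{−r} ∑_j ε_j E(a_j,b_j))`. -/
noncomputable def stabProj {n : ℕ} (S : Finset (Matrix (V n) (V n) ℂ)) :
    Matrix (V n) (V n) ℂ :=
  (S.card : ℂ)⁻¹ • ∑ g ∈ S, g

section Aux

/-- The dot-product bilinear form on `σ → ZMod 2`. -/
def dotForm (σ : Type*) [Fintype σ] : LinearMap.BilinForm (ZMod 2) (σ → ZMod 2) :=
  LinearMap.mk₂ (ZMod 2) (fun v w => ∑ i, v i * w i)
    (fun v v' w => by simp [add_mul, Finset.sum_add_distrib])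
    (fun c v w => by simp [Finset.mul_sum, mul_assoc])
    (fun v w w' => by simp [mul_add, Finset.sum_add_distrib])
    (fun c v w => by simp [Finset.mul_sum]; exact Finset.sum_congr rfl fun i _ => by ring)

lemma dotForm_apply {σ : Type*} [Fintype σ] (v w : σ → ZMod 2) :
    dotForm σ v w = ∑ i, v i * w i := rfl

lemma dotForm_refl (σ : Type*) [Fintype σ] : (dotForm σ).IsRefl := by
  intro v w h
  rw [show dotForm σ w v = dotForm σ v w from Finset.sum_congr rfl fun i _ => mul_comm _ _]
  exact h

lemma dotForm_nondegenerate (σ : Type*) [Fintype σ] [DecidableEq σ] :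
    (dotForm σ).Nondegenerate := by
  refine (LinearMap.IsRefl.nondegenerate_iff_separatingLeft (dotForm_refl σ)).2 ?_
  intro v hv
  funext i
  have := hv (Pi.single i 1)
  simpa [dotForm_apply, Pi.single_apply, mul_ite, Finset.sum_ite_eq'] using this

lemma zmod2_cases : ∀ t : ZMod 2, t = 0 ∨ t = 1 := by decide

end Aux

/-- For a CSS-T pair `(C₁, C₂)` of length `n`, the coordinatewise product
of any `a ∈ C₁` and `x ∈ C₂` lies in the dual code `C₁^⊥`, i.e. `C₁ ∗ C₂ ⊆ C₁^⊥`. -/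
theorem csst_star_subset_dual (n : ℕ) (C₁ C₂ : Submodule (ZMod 2) (V n))
    (h : CSST C₁ C₂) :
    ∀ a ∈ C₁, ∀ x ∈ C₂, a * x ∈ dualCode C₁ := by
  obtain ⟨hsub, _heven, hself⟩ := h
  intro a ha x hx
  obtain ⟨Cx, hCxdual, hdim, hsupp, horth⟩ := hself x hx
  let r : (V n) →ₗ[ZMod 2] ({j : Fin n // x j = 1} → ZMod 2) :=
    LinearMap.funLeft (ZMod 2) (ZMod 2) (fun j : {j : Fin n // x j = 1} => (j : Fin n))
  have hzero : ∀ z ∈ Cx, ∀ j : Fin n, x j ≠ 1 → z j = 0 := by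
    intro z hz j hj
    rcases zmod2_cases (z j) with h0 | h1
    · exact h0
    · exact absurd (hsupp z hz j h1) hj
  have hsum : ∀ v w : V n, (∀ j : Fin n, x j ≠ 1 → v j = 0) →
      (∑ i : {j : Fin n // x j = 1}, v i * w i) = binInner v w := by
    intro v w hv
    have hst : (∑ j ∈ Finset.univ.filter (fun j => x j = 1), v j * w j)
        = ∑ i : {j : Fin n // x j = 1}, v i * w i :=
      Finset.sum_subtype _ (by intro j; simp) _
    calc (∑ i : {j : Fin n // x j = 1}, v i * w i)
        = ∑ j ∈ Finset.univ.filter (fun j => x j = 1), v j * w j := hst.symm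
      _ = ∑ j, v j * w j := Finset.sum_subset (Finset.filter_subset _ _)
          (fun j _ hj => by
            rw [Finset.mem_filter] at hj
            rw [hv j (fun hh => hj ⟨Finset.mem_univ j, hh⟩), zero_mul])
      _ = binInner v w := rfl
  set W : Submodule (ZMod 2) ({j : Fin n // x j = 1} → ZMod 2) := Cx.map r with hW
  have hinj : Function.Injective (r.comp Cx.subtype) := by
    rw [← LinearMap.ker_eq_bot, LinearMap.ker_eq_bot']
    rintro ⟨z, hz⟩ hrz
    have hrz' : r z = 0 := hrz
    apply Subtype.ext
    funext j
    show z j = 0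
    rcases zmod2_cases (x j) with hx0 | hx1
    · exact hzero z hz j (by rw [hx0]; decide)
    · exact congrFun hrz' ⟨j, hx1⟩
  have hcard : Fintype.card {j : Fin n // x j = 1} = wH x := by
    rw [Fintype.card_subtype]; rfl
  have hfrW : Module.finrank (ZMod 2) W = Module.finrank (ZMod 2) Cx := by
    have hrange : LinearMap.range (r.comp Cx.subtype) = W := by
      rw [LinearMap.range_comp, Submodule.range_subtype]
    rw [← hrange]
    exact LinearMap.finrank_range_of_inj hinj
  have hfrV : Module.finrank (ZMod 2) ({j : Fin n // x j = 1} → ZMod 2) = wH x := by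
    rw [Module.finrank_pi, hcard]
  have hWle : W ≤ (dotForm {j : Fin n // x j = 1}).orthogonal W := by
    rintro _ ⟨z2, hz2, rfl⟩
    rw [LinearMap.BilinForm.mem_orthogonal_iff]
    rintro _ ⟨z1, hz1, rfl⟩
    show dotForm _ (r z1) (r z2) = 0
    rw [dotForm_apply]
    have h1 : (∑ i : {j : Fin n // x j = 1}, (r z1) i * (r z2) i) = binInner z1 z2 :=
      hsum z1 z2 (hzero z1 hz1)
    rw [h1]
    exact horth z1 hz1 z2 hz2
  have hWeq : (dotForm {j : Fin n // x j = 1}).orthogonal W = W := by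
    refine (Submodule.eq_of_le_of_finrank_le hWle ?_).symm
    rw [LinearMap.BilinForm.finrank_orthogonal (dotForm_nondegenerate _),
      hfrV, hfrW]
    omega
  have hmem : r (a * x) ∈ (dotForm {j : Fin n // x j = 1}).orthogonal W := by
    rw [LinearMap.BilinForm.mem_orthogonal_iff]
    rintro _ ⟨z, hz, rfl⟩
    show dotForm _ (r z) (r (a * x)) = 0
    rw [dotForm_apply]
    have h1 : (∑ i : {j : Fin n // x j = 1}, (r z) i * (r (a * x)) i) = binInner z (a * x) :=
      hsum z (a * x) (hzero z hz)
    rw [h1]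
    have h2 : binInner z (a * x) = binInner a z := by
      refine Finset.sum_congr rfl fun j _ => ?_
      show z j * ((a * x) j) = a j * z j
      rw [Pi.mul_apply]
      rcases zmod2_cases (x j) with hx0 | hx1
      · rw [hx0, hzero z hz j (by rw [hx0]; decide)]; ring
      · rw [hx1]; ring
    rw [h2]
    exact hCxdual hz a ha
  rw [hWeq] at hmem
  obtain ⟨z, hz, hrz⟩ := hmem
  have hax : a * x = z := by
    funext j
    show a j * x j = z j
    rcases zmod2_cases (x j) with hx0 | hx1
    · rw [hx0, mul_zero, hzero z hz j (by rw [hx0]; decide)]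
    · exact (congrFun hrz ⟨j, hx1⟩).symm
  rw [hax]
  exact hCxdual hz
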